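/- The 4×4 matrix R(u) with rows (1-η/u, 0, 0, 0), (-ξ, 1, -η/u, 0), (ξ, -η/u, 1, 0), (ξ², -ξ, ξ, 1-η/u) satisfies the quantum Yang–Baxter equation with additive spectral parameter: R^{12}(u-v) R^{13}(u-w) R^{23}(v-w) = R^{23}(v-w) R^{13}(u-w) R^{12}(u-v) as operators on (ℂ²)^{⊗3}, for all u, v, w where the expressions are defined. -/
import Mathlib


/-- Identification of `Fin 2 × Fin 2` with `Fin 4` in the basis order
`(1⊗1, 1⊗2, 2⊗1, 2⊗2)`. -/
def idx : Fin 2 × Fin 2 → Fin 4 := fun p =>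
  ⟨p.1.val * 2 + p.2.val, by have h1 := p.1.isLt; have h2 := p.2.isLt; omega⟩

/-- The deformed rational R-matrix with rows
`(1-η/u, 0, 0, 0), (-ξ, 1, -η/u, 0), (ξ, -η/u, 1, 0), (ξ², -ξ, ξ, 1-η/u)`,
acting on `ℂ² ⊗ ℂ²`. -/
noncomputable def Rmat (η ξ u : ℂ) : Matrix (Fin 2 × Fin 2) (Fin 2 × Fin 2) ℂ :=
  Matrix.of fun p q =>
    (!![1 - η / u, 0, 0, 0;
        -ξ, 1, -η / u, 0;
        ξ, -η / u, 1, 0;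
        ξ ^ 2, -ξ, ξ, 1 - η / u] : Matrix (Fin 4) (Fin 4) ℂ) (idx p) (idx q)

/-- `R¹² = R ⊗ I₂` acting on the first two factors of `(ℂ²)^⊗3`. -/
def R12 (M : Matrix (Fin 2 × Fin 2) (Fin 2 × Fin 2) ℂ) :
    Matrix (Fin 2 × Fin 2 × Fin 2) (Fin 2 × Fin 2 × Fin 2) ℂ :=
  Matrix.of fun p q => M (p.1, p.2.1) (q.1, q.2.1) * (if p.2.2 = q.2.2 then 1 else 0)

/-- `R²³ = I₂ ⊗ R` acting on the last two factors of `(ℂ²)^⊗3`. -/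
def R23 (M : Matrix (Fin 2 × Fin 2) (Fin 2 × Fin 2) ℂ) :
    Matrix (Fin 2 × Fin 2 × Fin 2) (Fin 2 × Fin 2 × Fin 2) ℂ :=
  Matrix.of fun p q => (if p.1 = q.1 then 1 else 0) * M (p.2.1, p.2.2) (q.2.1, q.2.2)

/-- `R¹³` acting on the first and third factors of `(ℂ²)^⊗3`. -/
def R13 (M : Matrix (Fin 2 × Fin 2) (Fin 2 × Fin 2) ℂ) :
    Matrix (Fin 2 × Fin 2 × Fin 2) (Fin 2 × Fin 2 × Fin 2) ℂ :=
  Matrix.of fun p q => M (p.1, p.2.2) (q.1, q.2.2) * (if p.2.1 = q.2.1 then 1 else 0)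

lemma Rmat_0000 (η ξ t : ℂ) : Rmat η ξ t (0 : Fin 2 × Fin 2) (0 : Fin 2 × Fin 2) = 1 - η / t := by simp [Rmat, idx]
lemma Rmat_0001 (η ξ t : ℂ) : Rmat η ξ t (0 : Fin 2 × Fin 2) ((0 : Fin 2), (1 : Fin 2)) = 0 := by simp [Rmat, idx]
lemma Rmat_0010 (η ξ t : ℂ) : Rmat η ξ t (0 : Fin 2 × Fin 2) ((1 : Fin 2), (0 : Fin 2)) = 0 := by simp [Rmat, idx]
lemma Rmat_0011 (η ξ t : ℂ) : Rmat η ξ t (0 : Fin 2 × Fin 2) (1 : Fin 2 × Fin 2) = 0 := by simp [Rmat, idx]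
lemma Rmat_0100 (η ξ t : ℂ) : Rmat η ξ t ((0 : Fin 2), (1 : Fin 2)) (0 : Fin 2 × Fin 2) = -ξ := by simp [Rmat, idx]
lemma Rmat_0101 (η ξ t : ℂ) : Rmat η ξ t ((0 : Fin 2), (1 : Fin 2)) ((0 : Fin 2), (1 : Fin 2)) = 1 := by simp [Rmat, idx]
lemma Rmat_0110 (η ξ t : ℂ) : Rmat η ξ t ((0 : Fin 2), (1 : Fin 2)) ((1 : Fin 2), (0 : Fin 2)) = -η / t := by simp [Rmat, idx]
lemma Rmat_0111 (η ξ t : ℂ) : Rmat η ξ t ((0 : Fin 2), (1 : Fin 2)) (1 : Fin 2 × Fin 2) = 0 := by simp [Rmat, idx]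
lemma Rmat_1000 (η ξ t : ℂ) : Rmat η ξ t ((1 : Fin 2), (0 : Fin 2)) (0 : Fin 2 × Fin 2) = ξ := by simp [Rmat, idx]
lemma Rmat_1001 (η ξ t : ℂ) : Rmat η ξ t ((1 : Fin 2), (0 : Fin 2)) ((0 : Fin 2), (1 : Fin 2)) = -η / t := by simp [Rmat, idx]
lemma Rmat_1010 (η ξ t : ℂ) : Rmat η ξ t ((1 : Fin 2), (0 : Fin 2)) ((1 : Fin 2), (0 : Fin 2)) = 1 := by simp [Rmat, idx]
lemma Rmat_1011 (η ξ t : ℂ) : Rmat η ξ t ((1 : Fin 2), (0 : Fin 2)) (1 : Fin 2 × Fin 2) = 0 := by simp [Rmat, idx]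
lemma Rmat_1100 (η ξ t : ℂ) : Rmat η ξ t (1 : Fin 2 × Fin 2) (0 : Fin 2 × Fin 2) = ξ ^ 2 := by simp [Rmat, idx]
lemma Rmat_1101 (η ξ t : ℂ) : Rmat η ξ t (1 : Fin 2 × Fin 2) ((0 : Fin 2), (1 : Fin 2)) = -ξ := by simp [Rmat, idx]
lemma Rmat_1110 (η ξ t : ℂ) : Rmat η ξ t (1 : Fin 2 × Fin 2) ((1 : Fin 2), (0 : Fin 2)) = ξ := by simp [Rmat, idx]
lemma Rmat_1111 (η ξ t : ℂ) : Rmat η ξ t (1 : Fin 2 × Fin 2) (1 : Fin 2 × Fin 2) = 1 - η / t := by simp [Rmat, idx]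

set_option maxHeartbeats 400000000 in
/-- The deformed rational R-matrix satisfies the quantum Yang–Baxter equation with
additive spectral parameter:
`R¹²(u-v) R¹³(u-w) R²³(v-w) = R²³(v-w) R¹³(u-w) R¹²(u-v)`. -/
theorem stmt_7 (η ξ u v w : ℂ) (huv : u ≠ v) (huw : u ≠ w) (hvw : v ≠ w) :
    R12 (Rmat η ξ (u - v)) * R13 (Rmat η ξ (u - w)) * R23 (Rmat η ξ (v - w)) =
      R23 (Rmat η ξ (v - w)) * R13 (Rmat η ξ (u - w)) * R12 (Rmat η ξ (u - v)) := by
  have h : η / (u - v) * (η / (v - w)) = η / (u - w) * (η / (u - v) + η / (v - w)) := by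
    have huv' : u - v ≠ 0 := sub_ne_zero.mpr huv
    have huw' : u - w ≠ 0 := sub_ne_zero.mpr huw
    have hvw' : v - w ≠ 0 := sub_ne_zero.mpr hvw
    field_simp
    ring
  ext ⟨a, b, c⟩ ⟨d, e, f⟩
  fin_cases a <;> fin_cases b <;> fin_cases c <;> fin_cases d <;> fin_cases e <;> fin_cases f <;>
    simp (config := { decide := true }) only [Matrix.mul_apply, R12, R13, R23, Matrix.of_apply,
      Fintype.sum_prod_type, Fin.sum_univ_two, Fin.zero_eta, Fin.mk_one, Prod.mk_zero_zero, Prod.mk_one_one, Prod.fst_zero, Prod.snd_zero, Prod.fst_one, Prod.snd_one,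
      Rmat_0000, Rmat_0001, Rmat_0010, Rmat_0011, Rmat_0100, Rmat_0101, Rmat_0110, Rmat_0111,
      Rmat_1000, Rmat_1001, Rmat_1010, Rmat_1011, Rmat_1100, Rmat_1101, Rmat_1110, Rmat_1111,
      if_true, if_false, ite_true, ite_false, mul_one, mul_zero, one_mul, zero_mul,
      add_zero, zero_add] <;>
    first
      | ring1
      | linear_combination h
      | linear_combination -h
      | linear_combination ξ * h
      | linear_combination -ξ * h
      | linear_combination 2 * ξ * h
      | linear_combination -2 * ξ * h
      | linear_combination ξ ^ 2 * h
      | linear_combination -ξ ^ 2 * h
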